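/- Let A, B, E be categories and π : E ⥤ A × B a functor; write π_A = π ⋙ pr_A and π_B = π ⋙ pr_B. Assume that (i) for every object x of E and every morphism f : π_A(x) → a of A there exists a morphism of E with source x lying over f which is strongly cocartesian for π_A, and (ii) π_B sends every π_A-strongly-cocartesian morphism of E to an isomorphism of B. Let a be an object of A and let φ : x → y be a morphism of E with π_A(φ) = id_a which, viewed as a morphism of the fiber E_a of π_A over a, is strongly cartesian for the restriction of π_B to E_a. Then φ is strongly cartesian for π_B : E ⥤ B. -/

import Mathlib

open CategoryTheory Functor

universe v₁ v₂ v₃ u₁ u₂ u₃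

variable {A : Type u₁} {B : Type u₂} {E : Type u₃}
  [Category.{v₁} A] [Category.{v₂} B] [Category.{v₃} E]

lemma fiber_homLift_iff {A' : Type*} {B' : Type*} [Category A'] [Category B']
    {p : E ⥤ A'} {s : A'} (q : E ⥤ B') {X Y : p.Fiber s} (φ : X ⟶ Y)
    {b b' : B'} (f : b ⟶ b') :
    (Fiber.fiberInclusion ⋙ q).IsHomLift f φ ↔
      q.IsHomLift f ((Fiber.fiberInclusion (p := p) (S := s)).map φ) := by
  constructor
  · intro h
    cases h
    exact inferInstanceAs (q.IsHomLift (q.map _) _)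
  · intro h
    cases h
    exact inferInstanceAs ((Fiber.fiberInclusion ⋙ q).IsHomLift
      ((Fiber.fiberInclusion ⋙ q).map φ) φ)

lemma aux_fiberwise_stronglyCartesian {A' : Type*} {B' : Type*} [Category A'] [Category B']
    (p : E ⥤ A') (q : E ⥤ B')
    (hlift : ∀ (x : E) (a : A') (f : p.obj x ⟶ a),
      ∃ (y : E) (φ : x ⟶ y), p.IsStronglyCocartesian f φ)
    (hiso : ∀ {x y : E} {a a' : A'} (f : a ⟶ a') (φ : x ⟶ y),
      p.IsStronglyCocartesian f φ → IsIso (q.map φ))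
    (a : A') {X Y : p.Fiber a} (φ : X ⟶ Y) {b b' : B'} (g : b ⟶ b')
    (hφ : (Fiber.fiberInclusion ⋙ q).IsStronglyCartesian g φ) :
    q.IsStronglyCartesian g ((Fiber.fiberInclusion (p := p) (S := a)).map φ) := by
  set F : p.Fiber a ⥤ B' := Fiber.fiberInclusion ⋙ q with hF
  set ι : p.Fiber a ⥤ E := Fiber.fiberInclusion with hι
  have hφB : q.IsHomLift g (ι.map φ) := (fiber_homLift_iff q φ g).mp hφ.toIsHomLift
  have hY' : q.obj (ι.obj Y) = b' := IsHomLift.codomain_eq q g (ι.map φ)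
  have hX' : q.obj (ι.obj X) = b := IsHomLift.domain_eq q g (ι.map φ)
  have hφA : p.IsHomLift (𝟙 a) (ι.map φ) := φ.2
  refine ⟨?_⟩
  intro z h ψ hψ
  -- the strongly cocartesian lift of p(ψ)
  set f : p.obj z ⟶ a := p.map ψ ≫ eqToHom Y.2 with hf
  obtain ⟨w, θ, hθ⟩ := hlift z a f
  have : p.IsStronglyCocartesian f θ := hθ
  have hθiso : IsIso (q.map θ) := hiso f θ hθ
  have hψA : p.IsHomLift f ψ := IsHomLift.of_fac' p f ψ rfl Y.2 (by simp [hf]; erw [eqToHom_trans, eqToHom_refl, Category.comp_id])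
  -- factor ψ through θ
  set τ : w ⟶ ι.obj Y := IsStronglyCocartesian.map p f θ (g := 𝟙 a) (Category.comp_id f).symm ψ
    with hτ
  have hτl : p.IsHomLift (𝟙 a) τ := inferInstance
  have hτfac : θ ≫ τ = ψ := IsStronglyCocartesian.fac p f θ _ ψ
  have hw : p.obj w = a := IsHomLift.domain_eq p (𝟙 a) τ
  -- τ as a morphism in the fiber
  set W : p.Fiber a := Fiber.mk hw with hW
  set τF : W ⟶ Y := ⟨τ, hτl⟩ with hτF
  set g₀ : q.obj w ⟶ b := inv (q.map θ) ≫ h with hg₀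
  have hψB' : q.map ψ = (h ≫ g) ≫ eqToHom hY'.symm := by
    have := IsHomLift.fac' q (h ≫ g) ψ
    simpa using this
  have hτB : q.map τ = (g₀ ≫ g) ≫ eqToHom hY'.symm := by
    have h1 : q.map θ ≫ q.map τ = q.map ψ := by rw [← q.map_comp, hτfac]
    rw [hg₀]
    simp only [Category.assoc]
    rw [IsIso.eq_inv_comp, h1, hψB', Category.assoc]
  have hτFl : F.IsHomLift (g₀ ≫ g) τF :=
    (fiber_homLift_iff q τF (g₀ ≫ g)).mpr
      (IsHomLift.of_fac' q _ τ rfl hY' (by simpa using hτB))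
  -- factor τF through φ in the fiber
  set σF : W ⟶ X := IsStronglyCartesian.map F g φ (g := g₀) rfl τF with hσF
  have hσFl : F.IsHomLift g₀ σF := inferInstance
  have hσFfac : σF ≫ φ = τF := IsStronglyCartesian.fac F g φ _ τF
  set σ : w ⟶ ι.obj X := ι.map σF with hσ
  have hσB : q.IsHomLift g₀ σ := (fiber_homLift_iff q σF g₀).mp hσFl
  have hσA : p.IsHomLift (𝟙 a) σ := σF.2
  have hσfacE : σ ≫ ι.map φ = τ := congrArg Subtype.val hσFfac
  -- the candidate
  refine ⟨θ ≫ σ, ⟨?_, ?_⟩, ?_⟩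
  · -- θ ≫ σ lifts h
    have hσB' : q.map σ = g₀ ≫ eqToHom hX'.symm := by
      have := IsHomLift.fac' q g₀ σ
      simpa using this
    refine IsHomLift.of_fac' q h _ rfl hX' ?_
    rw [q.map_comp, hσB', hg₀]
    simp
  · rw [Category.assoc, hσfacE, hτfac]
  · -- uniqueness
    rintro χ' ⟨hχ'l, hχ'fac⟩
    have hχ'A : p.IsHomLift f χ' := by
      refine IsHomLift.of_fac' p f χ' rfl X.2 ?_
      have h1 : p.map χ' ≫ p.map (ι.map φ) = p.map ψ := by
        rw [← p.map_comp, hχ'fac]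
      have h2 : p.map (ι.map φ) = eqToHom X.2 ≫ 𝟙 a ≫ eqToHom Y.2.symm :=
        IsHomLift.fac' p (𝟙 a) _
      rw [hf, ← h1, h2]
      simp
      erw [Category.assoc, eqToHom_trans, eqToHom_trans, eqToHom_refl, Category.comp_id]
    -- factor χ' through θ
    set σ' : w ⟶ ι.obj X := IsStronglyCocartesian.map p f θ (g := 𝟙 a)
      (Category.comp_id f).symm χ' with hσ'
    have hσ'l : p.IsHomLift (𝟙 a) σ' := inferInstance
    have hσ'fac : θ ≫ σ' = χ' := IsStronglyCocartesian.fac p f θ _ χ'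
    -- σ' as a fiber morphism
    set σ'F : W ⟶ X := ⟨σ', hσ'l⟩ with hσ'F
    -- σ'F satisfies the universal property defining σF
    have hcomp : σ'F ≫ φ = τF := by
      apply Fiber.hom_ext
      show σ' ≫ ι.map φ = τ
      have : p.IsHomLift (𝟙 a) (σ' ≫ ι.map φ) := inferInstance
      apply IsStronglyCocartesian.ext p f θ (𝟙 a)
      rw [← Category.assoc, hσ'fac, hχ'fac, ← hτfac]
    have hσ'B : q.map σ' = g₀ ≫ eqToHom hX'.symm := by
      have h1 : q.map θ ≫ q.map σ' = q.map χ' := by rw [← q.map_comp, hσ'fac]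
      have h2 : q.map χ' = h ≫ eqToHom hX'.symm := by
        have := IsHomLift.fac' q h χ'
        simpa using this
      rw [hg₀]
      simp only [Category.assoc]
      rw [IsIso.eq_inv_comp, h1, h2]
    have hσ'Fl : F.IsHomLift g₀ σ'F :=
      (fiber_homLift_iff q σ'F g₀).mpr
        (IsHomLift.of_fac' q _ σ' rfl hX' (by simpa using hσ'B))
    have heq : σ'F = σF := IsStronglyCartesian.map_uniq F g φ rfl τF σ'F hcomp
    have : σ' = σ := congrArg Subtype.val heq
    rw [← hσ'fac, this]

/-- Let `π : E ⥤ A × B` be a functor such that `π_A := π ⋙ pr_A` admits strongly cocartesian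
lifts of all morphisms out of the image of any object, and such that `π_B := π ⋙ pr_B` sends
every `π_A`-strongly-cocartesian morphism to an isomorphism.  If a morphism `φ` of the fiber
of `π_A` over `a : A` is strongly cartesian for the restriction of `π_B` to this fiber, then
the underlying morphism of `E` is strongly cartesian for `π_B`. -/
theorem fiberwise_stronglyCartesian_is_stronglyCartesian (π : E ⥤ A × B)
    (hlift : ∀ (x : E) (a : A) (f : (π ⋙ CategoryTheory.Prod.fst A B).obj x ⟶ a),
      ∃ (y : E) (φ : x ⟶ y), (π ⋙ CategoryTheory.Prod.fst A B).IsStronglyCocartesian f φ)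
    (hiso : ∀ {x y : E} {a a' : A} (f : a ⟶ a') (φ : x ⟶ y),
      (π ⋙ CategoryTheory.Prod.fst A B).IsStronglyCocartesian f φ →
        IsIso ((π ⋙ CategoryTheory.Prod.snd A B).map φ))
    (a : A) {X Y : (π ⋙ CategoryTheory.Prod.fst A B).Fiber a} (φ : X ⟶ Y)
    {b b' : B} (g : b ⟶ b')
    (hφ : (Fiber.fiberInclusion ⋙ (π ⋙ CategoryTheory.Prod.snd A B)).IsStronglyCartesian g φ) :
    (π ⋙ CategoryTheory.Prod.snd A B).IsStronglyCartesian g (Fiber.fiberInclusion.map φ) :=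
  aux_fiberwise_stronglyCartesian (π ⋙ CategoryTheory.Prod.fst A B)
    (π ⋙ CategoryTheory.Prod.snd A B) hlift hiso a φ g hφ
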